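/- Let A and F be Lie subalgebras of L and let e₁, …, e_n ∈ L be elements such that L = A + R·e₁ + ⋯ + R·e_n + F as an R-module (a sum of R-submodules). Then the universal enveloping algebra U(L) is spanned as an R-module by the products ι(a₁)⋯ι(a_r) · ι(e₁)^{N₁} ⋯ ι(e_n)^{N_n} · ι(f₁)⋯ι(f_s), where r, s ≥ 0, a₁,…,a_r ∈ A, f₁,…,f_s ∈ F, (N₁,…,N_n) ∈ ℕⁿ, and ι : L → U(L) is the canonical map. Equivalently, U(L) = Σ_{(N₁,…,N_n)∈ℕⁿ} U(A) ∘ ι(e₁)^{N₁} ∘ ⋯ ∘ ι(e_n)^{N_n} ∘ U(F), where U(A) and U(F) denote the images in U(L) of the enveloping algebras of A and F. -/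

import Mathlib

/-!
STATEMENT 12 (first step of the proof of Proposition 3.13 of the paper, after Sorger).

Let `R` be a commutative ring, `L` a Lie algebra over `R`, `A` and `F` Lie subalgebras of
`L`, and `e₁, …, eₙ ∈ L` elements with `L = A + R·e₁ + ⋯ + R·eₙ + F` as an `R`-module.
Then the universal enveloping algebra `U(L)` is spanned as an `R`-module by the products
`ι(a₁)⋯ι(a_r) · ι(e₁)^{N₁} ⋯ ι(eₙ)^{Nₙ} · ι(f₁)⋯ι(f_s)` with `a₁, …, a_r ∈ A`,
`f₁, …, f_s ∈ F` and `(N₁, …, Nₙ) ∈ ℕⁿ`, where `ι : L → U(L)` is the canonical map;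
i.e. `U(L) = Σ_{N ∈ ℕⁿ} U(A) ∘ ι(e₁)^{N₁} ∘ ⋯ ∘ ι(eₙ)^{Nₙ} ∘ U(F)`.
-/

open UniversalEnvelopingAlgebra

namespace Stmt12Aux

lemma prod_pow_update {M : Type*} [Monoid M] :
    ∀ {n : ℕ} (g : Fin n → M) (N : Fin n → ℕ) (j : Fin n), (∀ i, i < j → N i = 0) →
    g j * (List.ofFn fun i => g i ^ N i).prod
      = (List.ofFn fun i => g i ^ (Function.update N j (N j + 1)) i).prod
  | 0, _, _, j, _ => j.elim0
  | (n+1), g, N, j, hN => by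
    rw [List.ofFn_succ, List.ofFn_succ, List.prod_cons, List.prod_cons]
    rcases Fin.eq_zero_or_eq_succ j with rfl | ⟨j', rfl⟩
    · rw [Function.update_self, ← mul_assoc, ← pow_succ']
      refine congrArg₂ _ rfl (congrArg List.prod (congrArg List.ofFn (funext fun i => ?_)))
      rw [Function.update_of_ne (Fin.succ_ne_zero i)]
    · have h0 : N 0 = 0 := hN 0 (Fin.succ_pos j')
      have hupd : (Function.update N j'.succ (N j'.succ + 1)) ∘ Fin.succ
          = Function.update (N ∘ Fin.succ) j' (N j'.succ + 1) :=
        Function.update_comp_eq_of_injective _ (Fin.succ_injective n) _ _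
      have h0' : (Function.update N j'.succ (N j'.succ + 1)) 0 = 0 := by
        rw [Function.update_of_ne (Fin.succ_ne_zero j').symm, h0]
      rw [h0, pow_zero, one_mul, h0', pow_zero, one_mul]
      have key := prod_pow_update (fun i : Fin n => g i.succ) (fun i => N i.succ) j'
        (fun i hi => hN i.succ (by simpa using hi))
      rw [key]
      refine congrArg List.prod (congrArg List.ofFn (funext fun i => ?_))
      show g i.succ ^ Function.update (N ∘ Fin.succ) j' (N j'.succ + 1) i = _
      rw [← hupd]
      rfl

variable {R L : Type*} [CommRing R] [LieRing L] [LieAlgebra R L]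

lemma iota_swap (x y : L) (w : UniversalEnvelopingAlgebra R L) :
    ι R x * (ι R y * w) = ι R y * (ι R x * w) + ι R ⁅x, y⁆ * w := by
  have h : ι R ⁅x, y⁆ = ι R x * ι R y - ι R y * ι R x := by
    letI : LieRing (UniversalEnvelopingAlgebra R L) := LieRing.ofAssociativeRing
    rw [LieHom.map_lie, Ring.lie_def]
  rw [h, sub_mul, ← mul_assoc, ← mul_assoc]
  abel

variable (R) in
noncomputable def wA (l : List L) : UniversalEnvelopingAlgebra R L := (l.map (ι R)).prod

variable (R) in
noncomputable def Ew {n : ℕ} (e : Fin n → L) (N : Fin n → ℕ) : UniversalEnvelopingAlgebra R L :=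
  (List.ofFn fun j => (ι R (e j)) ^ N j).prod

variable (R) in
noncomputable def word {n : ℕ} (e : Fin n → L) (la : List L) (N : Fin n → ℕ) (lf : List L) :
    UniversalEnvelopingAlgebra R L :=
  wA R la * Ew R e N * wA R lf

variable {n : ℕ} {e : Fin n → L}

lemma word_cons (a : L) (la : List L) (N : Fin n → ℕ) (lf : List L) :
    word R e (a :: la) N lf = ι R a * word R e la N lf := by
  simp [word, wA, mul_assoc]

lemma Ew_eq_one {N : Fin n → ℕ} (hN : ∀ i, N i = 0) : Ew R e N = 1 := by
  refine List.prod_eq_one fun x hx => ?_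
  rw [List.mem_ofFn] at hx
  obtain ⟨i, rfl⟩ := hx
  simp [hN i]

lemma word_nil_zero {N : Fin n → ℕ} (hN : ∀ i, N i = 0) (lf : List L) (f : L) :
    ι R f * word R e [] N lf = word R e [] N (f :: lf) := by
  simp [word, wA, Ew_eq_one hN, mul_assoc]

lemma word_prepend_e (j : Fin n) {N : Fin n → ℕ} (hN : ∀ i, i < j → N i = 0) (lf : List L) :
    ι R (e j) * word R e [] N lf = word R e [] (Function.update N j (N j + 1)) lf := by
  simp only [word, wA, List.map_nil, List.prod_nil, one_mul, ← mul_assoc]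
  rw [Ew, Ew, prod_pow_update (fun i => ι R (e i)) N j hN]

lemma word_pop (j : Fin n) {N : Fin n → ℕ} (hN : ∀ i, i < j → N i = 0) (hj : N j ≠ 0)
    (lf : List L) :
    word R e [] N lf = ι R (e j) * word R e [] (Function.update N j (N j - 1)) lf := by
  have h1 : Function.update (Function.update N j (N j - 1)) j
      (Function.update N j (N j - 1) j + 1) = N := by
    rw [Function.update_self, Function.update_idem, Nat.sub_add_cancel (Nat.one_le_iff_ne_zero.2 hj),
      Function.update_eq_self]
  have h2 : ∀ i, i < j → Function.update N j (N j - 1) i = 0 := fun i hi => by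
    rw [Function.update_of_ne (ne_of_lt hi), hN i hi]
  rw [word_prepend_e j h2 lf, h1]

lemma sum_update_succ (N : Fin n → ℕ) (j : Fin n) :
    (∑ i, Function.update N j (N j + 1) i) = (∑ i, N i) + 1 := by
  rw [Finset.sum_update_of_mem (Finset.mem_univ j)]
  have := Finset.add_sum_erase Finset.univ N (Finset.mem_univ j)
  rw [Finset.erase_eq] at this
  omega

lemma sum_update_pred (N : Fin n → ℕ) (j : Fin n) (hj : N j ≠ 0) :
    (∑ i, Function.update N j (N j - 1) i) + 1 = ∑ i, N i := by
  rw [Finset.sum_update_of_mem (Finset.mem_univ j)]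
  have := Finset.add_sum_erase Finset.univ N (Finset.mem_univ j)
  rw [Finset.erase_eq] at this
  omega

variable (R e) in
noncomputable def Good (A F : LieSubalgebra R L) (m : ℕ) :
    Submodule R (UniversalEnvelopingAlgebra R L) :=
  Submodule.span R {u | ∃ la N lf, (∀ y ∈ la, y ∈ A) ∧ (∀ y ∈ lf, y ∈ F) ∧
    la.length + (∑ i, N i) + lf.length ≤ m ∧ u = word R e la N lf}

variable {A F : LieSubalgebra R L}

lemma good_word {la : List L} {N : Fin n → ℕ} {lf : List L} {m : ℕ}
    (hla : ∀ y ∈ la, y ∈ A) (hlf : ∀ y ∈ lf, y ∈ F)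
    (hlen : la.length + (∑ i, N i) + lf.length ≤ m) :
    word R e la N lf ∈ Good R e A F m :=
  Submodule.subset_span ⟨la, N, lf, hla, hlf, hlen, rfl⟩

lemma good_mono {m m' : ℕ} (h : m ≤ m') : Good R e A F m ≤ Good R e A F m' :=
  Submodule.span_mono fun u => by
    rintro ⟨la, N, lf, h1, h2, h3, rfl⟩
    exact ⟨la, N, lf, h1, h2, h3.trans h, rfl⟩

lemma mul_left_mem {m : ℕ} {x : L}
    (hx : ∀ la (N : Fin n → ℕ) lf, (∀ y ∈ la, y ∈ A) → (∀ y ∈ lf, y ∈ F) →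
      la.length + (∑ i, N i) + lf.length ≤ m → ι R x * word R e la N lf ∈ Good R e A F (m + 1))
    {u} (hu : u ∈ Good R e A F m) : ι R x * u ∈ Good R e A F (m + 1) := by
  have hle : Good R e A F m ≤
      (Good R e A F (m + 1)).comap (LinearMap.mulLeft R (ι R x)) := by
    rw [Good, Submodule.span_le]
    rintro u ⟨la, N, lf, h1, h2, h3, rfl⟩
    simpa using hx la N lf h1 h2 h3
  simpa using hle hu

lemma exists_min {N : Fin n → ℕ} {i₁ : Fin n} (h1 : N i₁ ≠ 0) :
    ∃ i₀ : Fin n, i₀ ≤ i₁ ∧ N i₀ ≠ 0 ∧ ∀ i, i < i₀ → N i = 0 := by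
  classical
  have hp : ∃ k, ∃ hk : k < n, N ⟨k, hk⟩ ≠ 0 := ⟨i₁.val, i₁.isLt, by simpa using h1⟩
  obtain ⟨hk₀, hNk₀⟩ := Nat.find_spec hp
  refine ⟨⟨Nat.find hp, hk₀⟩, ?_, hNk₀, ?_⟩
  · exact Nat.find_min' hp ⟨i₁.isLt, by simpa using h1⟩
  · intro i hi
    by_contra hne
    exact Nat.find_min hp (show i.val < Nat.find hp from hi) ⟨i.isLt, by simpa using hne⟩


section Key

variable (h : (A : Submodule R L) ⊔ Submodule.span R (Set.range e) ⊔ (F : Submodule R L) = ⊤)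

include h in
lemma decomp (x : L) {la : List L} {N : Fin n → ℕ} {lf : List L} {m : ℕ}
    (hla : ∀ y ∈ la, y ∈ A) (hlf : ∀ y ∈ lf, y ∈ F)
    (hlen : la.length + (∑ i, N i) + lf.length ≤ m)
    (hcb : ∀ (j : ℕ), j ≤ n → ∀ y : L, ((∃ hj : j < n, y = e ⟨j, hj⟩) ∨ (j = n ∧ y ∈ F)) →
      ι R y * word R e la N lf ∈ Good R e A F (m + 1)) :
    ι R x * word R e la N lf ∈ Good R e A F (m + 1) := by
  have hx : x ∈ (A : Submodule R L) ⊔ (Submodule.span R (Set.range e) ⊔ (F : Submodule R L)) := by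
    rw [← sup_assoc, h]; exact Submodule.mem_top
  obtain ⟨a, ha, y, hy, rfl⟩ := Submodule.mem_sup.1 hx
  obtain ⟨s, hs, f, hf, rfl⟩ := Submodule.mem_sup.1 hy
  obtain ⟨c, rfl⟩ := (Submodule.mem_span_range_iff_exists_fun R).1 hs
  have expand : ι R (a + (∑ i, c i • e i + f)) * word R e la N lf
      = ι R a * word R e la N lf + ((∑ i, c i • (ι R (e i) * word R e la N lf))
          + ι R f * word R e la N lf) := by
    letI : LieRing (UniversalEnvelopingAlgebra R L) := LieRing.ofAssociativeRing
    have hsum : ι R (∑ i, c i • e i) = ∑ i, c i • ι R (e i) := by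
      rw [← LieHom.coe_toLinearMap, map_sum]
      simp only [LinearMap.map_smul, LieHom.coe_toLinearMap]
    rw [map_add, map_add, add_mul, add_mul, hsum, Finset.sum_mul]
    simp_rw [smul_mul_assoc]
  rw [expand]
  refine Submodule.add_mem _ ?_ (Submodule.add_mem _ ?_ ?_)
  · rw [← word_cons]
    refine good_word ?_ hlf ?_
    · intro z hz
      rcases List.mem_cons.1 hz with rfl | hz
      exacts [ha, hla z hz]
    · simp only [List.length_cons]; omega
  · refine Submodule.sum_mem _ fun i _ => Submodule.smul_mem _ _ ?_
    exact hcb i.val i.isLt.le (e i) (Or.inl ⟨i.isLt, by simp⟩)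
  · exact hcb n le_rfl f (Or.inr ⟨rfl, hf⟩)

include h in
lemma key : ∀ K m j, m * (n + 1) + j = K → j ≤ n →
    ∀ x : L, ((∃ hj : j < n, x = e ⟨j, hj⟩) ∨ (j = n ∧ x ∈ F)) →
    ∀ la (N : Fin n → ℕ) lf, (∀ y ∈ la, y ∈ A) → (∀ y ∈ lf, y ∈ F) →
      la.length + (∑ i, N i) + lf.length ≤ m →
      ι R x * word R e la N lf ∈ Good R e A F (m + 1) := by
  intro K
  induction K using Nat.strong_induction_on with
  | _ K IH =>
  have hLx : ∀ m', m' * (n + 1) + n < K → ∀ (x : L) la (N : Fin n → ℕ) lf,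
      (∀ y ∈ la, y ∈ A) → (∀ y ∈ lf, y ∈ F) →
      la.length + (∑ i, N i) + lf.length ≤ m' →
      ι R x * word R e la N lf ∈ Good R e A F (m' + 1) := by
    intro m' hm' x la N lf hla hlf hlen
    refine decomp h x hla hlf hlen fun j' hj' y hy => ?_
    exact IH (m' * (n + 1) + j') (lt_of_le_of_lt (Nat.add_le_add_left hj' _) hm')
      m' j' rfl hj' y hy la N lf hla hlf hlen
  intro m j hK hjn x hx la N lf hla hlf hlen
  cases la with
  | cons a la =>
    have h1m : 1 ≤ m := by
      simp only [List.length_cons] at hlen; omega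
    obtain ⟨m', rfl⟩ : ∃ m', m = m' + 1 := ⟨m - 1, by omega⟩
    have hmul : m' * (n + 1) + (n + 1) = (m' + 1) * (n + 1) := by ring
    have hlt1 : m' * (n + 1) + j < K := by
      rw [← hK, ← hmul, add_assoc]
      exact Nat.add_lt_add_left (by omega) _
    have hltn : m' * (n + 1) + n < K := by
      rw [← hK, ← hmul, add_assoc]
      exact Nat.add_lt_add_left (by omega) _
    have hlen' : la.length + (∑ i, N i) + lf.length ≤ m' := by
      simp only [List.length_cons] at hlen; omega
    have hla' : ∀ y ∈ la, y ∈ A := fun y hy => hla y (List.mem_cons_of_mem a hy)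
    have haA : a ∈ A := hla a List.mem_cons_self
    rw [word_cons, iota_swap]
    refine Submodule.add_mem _ ?_ ?_
    · have h1 : ι R x * word R e la N lf ∈ Good R e A F (m' + 1) :=
        IH (m' * (n + 1) + j) hlt1 m' j rfl hjn x hx la N lf hla' hlf hlen'
      refine mul_left_mem (fun lb Nb lb' hb1 hb2 hb3 => ?_) h1
      rw [← word_cons]
      refine good_word ?_ hb2 ?_
      · intro z hz
        rcases List.mem_cons.1 hz with rfl | hz
        exacts [haA, hb1 z hz]
      · simp only [List.length_cons]; omega
    · exact good_mono (by omega) (hLx m' hltn ⁅x, a⁆ la N lf hla' hlf hlen')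
  | nil =>
    have popcase : ∀ i₀ : Fin n, i₀.val < j → N i₀ ≠ 0 → (∀ i, i < i₀ → N i = 0) →
        ι R x * word R e [] N lf ∈ Good R e A F (m + 1) := by
      intro i₀ hi₀j hne hmin
      have hsum : (∑ i, Function.update N i₀ (N i₀ - 1) i) + 1 = ∑ i, N i :=
        sum_update_pred N i₀ hne
      have hNge : 1 ≤ ∑ i, N i :=
        le_trans (Nat.one_le_iff_ne_zero.2 hne)
          (Finset.single_le_sum (f := N) (fun i _ => Nat.zero_le _) (Finset.mem_univ i₀))
      have h1m : 1 ≤ m := by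
        simp only [List.length_nil] at hlen; omega
      obtain ⟨m', rfl⟩ : ∃ m', m = m' + 1 := ⟨m - 1, by omega⟩
      have hmul : m' * (n + 1) + (n + 1) = (m' + 1) * (n + 1) := by ring
      have hlt1 : m' * (n + 1) + j < K := by
        rw [← hK, ← hmul, add_assoc]
        exact Nat.add_lt_add_left (by omega) _
      have hltn : m' * (n + 1) + n < K := by
        rw [← hK, ← hmul, add_assoc]
        exact Nat.add_lt_add_left (by omega) _
      have hlti : (m' + 1) * (n + 1) + i₀.val < K := by
        rw [← hK]
        exact Nat.add_lt_add_left hi₀j _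
      have hlen' : ([] : List L).length + (∑ i, Function.update N i₀ (N i₀ - 1) i)
          + lf.length ≤ m' := by
        simp only [List.length_nil] at hlen ⊢; omega
      rw [word_pop i₀ hmin hne lf, iota_swap]
      refine Submodule.add_mem _ ?_ ?_
      · have h1 : ι R x * word R e [] (Function.update N i₀ (N i₀ - 1)) lf
            ∈ Good R e A F (m' + 1) :=
          IH (m' * (n + 1) + j) hlt1 m' j rfl hjn x hx [] _ lf (by simp) hlf hlen'
        refine mul_left_mem (fun lb Nb lb' hb1 hb2 hb3 => ?_) h1
        exact IH ((m' + 1) * (n + 1) + i₀.val) hlti (m' + 1) i₀.val rfl i₀.isLt.le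
          (e i₀) (Or.inl ⟨i₀.isLt, by simp⟩) lb Nb lb' hb1 hb2 hb3
      · exact good_mono (by omega)
          (hLx m' hltn ⁅x, e i₀⁆ [] _ lf (by simp) hlf hlen')
    rcases hx with ⟨hj, rfl⟩ | ⟨rfl, hfF⟩
    · by_cases hN : ∀ i : Fin n, i < ⟨j, hj⟩ → N i = 0
      · rw [word_prepend_e ⟨j, hj⟩ hN lf]
        refine good_word (by simp) hlf ?_
        rw [sum_update_succ]
        simp only [List.length_nil] at hlen ⊢
        omega
      · push_neg at hN
        obtain ⟨i₁, hi₁lt, hi₁ne⟩ := hN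
        obtain ⟨i₀, hle, hne, hmin⟩ := exists_min hi₁ne
        exact popcase i₀ (lt_of_le_of_lt hle hi₁lt) hne hmin
    · by_cases hN0 : ∀ i, N i = 0
      · rw [word_nil_zero hN0 lf]
        refine good_word (by simp) ?_ ?_
        · intro z hz
          rcases List.mem_cons.1 hz with rfl | hz
          exacts [hfF, hlf z hz]
        · simp only [List.length_nil, List.length_cons] at hlen ⊢
          omega
      · push_neg at hN0
        obtain ⟨i₁, hi₁ne⟩ := hN0
        obtain ⟨i₀, hle, hne, hmin⟩ := exists_min hi₁ne
        exact popcase i₀ (i₀.isLt) hne hmin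

include h in
lemma Lx (x : L) (la : List L) (N : Fin n → ℕ) (lf : List L)
    (hla : ∀ y ∈ la, y ∈ A) (hlf : ∀ y ∈ lf, y ∈ F) :
    ι R x * word R e la N lf
      ∈ Good R e A F (la.length + (∑ i, N i) + lf.length + 1) := by
  set m := la.length + (∑ i, N i) + lf.length with hm
  refine decomp h x hla hlf le_rfl fun j' hj' y hy => ?_
  exact key h (m * (n + 1) + j') m j' rfl hj' y hy la N lf hla hlf le_rfl

end Key

lemma ofFn_get_map (l : List L) : (List.ofFn fun i => ι R (l.get i)) = l.map (ι R) := by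
  simpa using List.ofFn_getElem_eq_map l (ι R)

end Stmt12Aux

open Stmt12Aux UniversalEnvelopingAlgebra

theorem stmt12 (R L : Type*) [CommRing R] [LieRing L] [LieAlgebra R L]
    (A F : LieSubalgebra R L) (n : ℕ) (e : Fin n → L)
    (h : (A : Submodule R L) ⊔ Submodule.span R (Set.range e) ⊔ (F : Submodule R L) = ⊤) :
    Submodule.span R
      { u : UniversalEnvelopingAlgebra R L |
        ∃ (r s : ℕ) (a : Fin r → L) (f : Fin s → L) (N : Fin n → ℕ),
          (∀ i, a i ∈ A) ∧ (∀ j, f j ∈ F) ∧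
          u = (List.ofFn fun i => UniversalEnvelopingAlgebra.ι R (a i)).prod *
              (List.ofFn fun j => (UniversalEnvelopingAlgebra.ι R (e j)) ^ (N j)).prod *
              (List.ofFn fun l => UniversalEnvelopingAlgebra.ι R (f l)).prod } = ⊤ := by
  classical
  set stmtSet : Set (UniversalEnvelopingAlgebra R L) :=
      { u : UniversalEnvelopingAlgebra R L |
        ∃ (r s : ℕ) (a : Fin r → L) (f : Fin s → L) (N : Fin n → ℕ),
          (∀ i, a i ∈ A) ∧ (∀ j, f j ∈ F) ∧
          u = (List.ofFn fun i => UniversalEnvelopingAlgebra.ι R (a i)).prod *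
              (List.ofFn fun j => (UniversalEnvelopingAlgebra.ι R (e j)) ^ (N j)).prod *
              (List.ofFn fun l => UniversalEnvelopingAlgebra.ι R (f l)).prod } with hset
  have hword : ∀ la (N : Fin n → ℕ) lf, (∀ y ∈ la, y ∈ A) → (∀ y ∈ lf, y ∈ F) →
      word R e la N lf ∈ Submodule.span R stmtSet := by
    intro la N lf h1 h2
    refine Submodule.subset_span ⟨la.length, lf.length, la.get, lf.get, N,
      fun i => h1 _ (la.get_mem i), fun j => h2 _ (lf.get_mem j), ?_⟩
    rw [word, wA, wA, Ew, ofFn_get_map, ofFn_get_map]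
  set GA : Submodule R (UniversalEnvelopingAlgebra R L) :=
    Submodule.span R {u | ∃ la N lf, (∀ y ∈ la, y ∈ A) ∧ (∀ y ∈ lf, y ∈ F) ∧
      u = word R e la N lf} with hGA
  have hGA_le : GA ≤ Submodule.span R stmtSet := by
    rw [hGA, Submodule.span_le]
    rintro u ⟨la, N, lf, h1, h2, rfl⟩
    exact hword la N lf h1 h2
  have hGood_le : ∀ m, Good R e A F m ≤ GA := fun m => by
    rw [Good, Submodule.span_le]
    rintro u ⟨la, N, lf, h1, h2, h3, rfl⟩
    exact Submodule.subset_span ⟨la, N, lf, h1, h2, rfl⟩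
  have hmulGA : ∀ x : L, ∀ u ∈ GA, ι R x * u ∈ GA := by
    intro x
    have hle : GA ≤ GA.comap (LinearMap.mulLeft R (ι R x)) := by
      rw [hGA, Submodule.span_le]
      rintro u ⟨la, N, lf, h1, h2, rfl⟩
      refine Submodule.mem_comap.2 ?_
      rw [LinearMap.mulLeft_apply]
      exact hGood_le _ (Lx h x la N lf h1 h2)
    intro u hu
    have := hle hu
    rwa [Submodule.mem_comap, LinearMap.mulLeft_apply] at this
  have hone : (1 : UniversalEnvelopingAlgebra R L) ∈ GA := by
    refine Submodule.subset_span ⟨[], fun _ => 0, [], by simp, by simp, ?_⟩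
    simp [word, wA, Ew_eq_one (N := fun _ => (0 : ℕ)) (fun _ => rfl)]
  have hall : ∀ u : UniversalEnvelopingAlgebra R L, ∀ v ∈ GA, u * v ∈ GA := by
    intro u
    obtain ⟨t, rfl⟩ := (show Function.Surjective (UniversalEnvelopingAlgebra.mkAlgHom R L) from
      RingCon.mkₐ_surjective _) u
    induction t using TensorAlgebra.induction with
    | algebraMap r =>
      intro v hv
      rw [AlgHom.commutes, ← Algebra.smul_def]
      exact Submodule.smul_mem _ _ hv
    | ι x =>
      intro v hv
      have hx : (UniversalEnvelopingAlgebra.mkAlgHom R L)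
          (TensorAlgebra.ι R x) = ι R x := rfl
      rw [hx]
      exact hmulGA x v hv
    | mul a b ha hb =>
      intro v hv
      rw [map_mul, mul_assoc]
      exact ha _ (hb v hv)
    | add a b ha hb =>
      intro v hv
      rw [map_add, add_mul]
      exact Submodule.add_mem _ (ha v hv) (hb v hv)
  have hGAtop : ∀ u : UniversalEnvelopingAlgebra R L, u ∈ GA := fun u => by
    simpa using hall u 1 hone
  rw [eq_top_iff]
  exact fun u _ => hGA_le (hGAtop u)
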